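/- If the interaction graph G(f) of a coding function f : A^V → A^V is acyclic, then f has exactly one fixed point. -/

import Mathlib

/-- Arc `(u,i)` of the interaction graph of a coding function `f`. -/
def arcCF {V A : Type*} [DecidableEq V] (f : (V → A) → V → A) (u i : V) : Prop :=
  ∃ (x : V → A) (a : A), f (Function.update x u a) i ≠ f x i

/-- `I` is an acyclic set of `G`. -/
def AcyclicIn {V : Type*} (G : V → V → Prop) (I : Set V) : Prop :=
  ∀ a ∈ I, ¬ ∃ l : List V, (∀ i ∈ l, i ∈ I) ∧ List.Chain G a (l ++ [a])

lemma transGen_chain {V : Type*} {r : V → V → Prop} {a b : V}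
    (h : Relation.TransGen r a b) : ∃ l : List V, List.Chain r a (l ++ [b]) := by
  induction h using Relation.TransGen.head_induction_on with
  | single hab => exact ⟨[], List.Chain.cons hab List.Chain.nil⟩
  | head hab _ ih =>
    obtain ⟨l, hl⟩ := ih
    exact ⟨_ :: l, List.Chain.cons hab hl⟩

theorem stmt10 {V A : Type*} [Fintype V] [DecidableEq V] [Nonempty A]
    (f : (V → A) → V → A) (h : AcyclicIn (arcCF f) Set.univ) :
    ∃! x : V → A, f x = x := by
  classical
  set r : V → V → Prop := arcCF f with hr
  -- well-foundedness
  have hirr : ∀ a, ¬ Relation.TransGen r a a := by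
    intro a ha
    obtain ⟨l, hl⟩ := transGen_chain ha
    exact h a (Set.mem_univ a) ⟨l, fun i _ => Set.mem_univ i, hl⟩
  have : IsIrrefl V (Relation.TransGen r) := ⟨hirr⟩
  have wf : WellFounded r := by
    have wft : WellFounded (Relation.TransGen r) :=
      Finite.wellFounded_of_trans_of_irrefl _
    exact Subrelation.wf (fun h => Relation.TransGen.single h) wft
  -- key: f x i depends only on coordinates u with r u i
  have key : ∀ (i : V) (x y : V → A), (∀ u, r u i → x u = y u) → f x i = f y i := by
    intro i
    have : ∀ (n : ℕ) (x y : V → A), (∀ u, r u i → x u = y u) →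
        (Finset.univ.filter fun u => x u ≠ y u).card ≤ n → f x i = f y i := by
      intro n
      induction n with
      | zero =>
        intro x y _ hc
        have : (Finset.univ.filter fun u => x u ≠ y u) = ∅ :=
          Finset.card_eq_zero.mp (Nat.le_zero.mp hc)
        have hxy : x = y := by
          funext u
          by_contra hu
          exact absurd this (Finset.ne_empty_of_mem
            (Finset.mem_filter.mpr ⟨Finset.mem_univ u, hu⟩))
        rw [hxy]
      | succ n ih =>
        intro x y hxy hc
        by_cases he : (Finset.univ.filter fun u => x u ≠ y u) = ∅
        · have hxy' : x = y := by
            funext u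
            by_contra hu
            exact absurd he (Finset.ne_empty_of_mem
              (Finset.mem_filter.mpr ⟨Finset.mem_univ u, hu⟩))
          rw [hxy']
        · obtain ⟨u, hu⟩ := Finset.nonempty_iff_ne_empty.mpr he
          have hxu : x u ≠ y u := (Finset.mem_filter.mp hu).2
          have hnr : ¬ r u i := fun hru => hxu (hxy u hru)
          have hupd : ∀ (z : V → A) (a : A), f (Function.update z u a) i = f z i := by
            intro z a
            by_contra hne
            exact hnr ⟨z, a, hne⟩
          set x' := Function.update x u (y u) with hx'
          have h1 : f x' i = f x i := hupd x (y u)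
          have h2 : f x' i = f y i := by
            apply ih
            · intro v hv
              by_cases hvu : v = u
              · subst hvu; simp [hx']
              · simp [hx', Function.update_of_ne hvu]; exact hxy v hv
            · have hsub : (Finset.univ.filter fun v => x' v ≠ y v) ⊆
                  (Finset.univ.filter fun v => x v ≠ y v).erase u := by
                intro v hv
                simp only [Finset.mem_filter, Finset.mem_univ, true_and] at hv
                have hvu : v ≠ u := by
                  intro hvu; subst hvu; simp [hx'] at hv
                refine Finset.mem_erase.mpr ⟨hvu, Finset.mem_filter.mpr
                  ⟨Finset.mem_univ v, ?_⟩⟩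
                rwa [hx', Function.update_of_ne hvu] at hv
              calc (Finset.univ.filter fun v => x' v ≠ y v).card
                  ≤ ((Finset.univ.filter fun v => x v ≠ y v).erase u).card :=
                    Finset.card_le_card hsub
                _ = (Finset.univ.filter fun v => x v ≠ y v).card - 1 :=
                    Finset.card_erase_of_mem hu
                _ ≤ n := by omega
          rw [← h1, h2]
    intro x y hxy
    exact this _ x y hxy le_rfl
  -- construct the fixed point
  have c : A := Classical.arbitrary A
  let x : V → A := wf.fix (fun i ih => f (fun u => if hu : r u i then ih u hu else c) i)
  have hx : ∀ i, x i = f (fun u => if hu : r u i then x u else c) i := by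
    intro i
    exact wf.fix_eq _ i
  have hfix : f x = x := by
    funext i
    rw [hx i]
    apply key
    intro u hu
    simp [hu]
  refine ⟨x, hfix, ?_⟩
  intro y hy
  funext i
  induction i using wf.induction with
  | _ i ih =>
    calc y i = f y i := by rw [hy]
    _ = f x i := key i y x ih
    _ = x i := by rw [hfix]
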